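/- Let m ≥ 2, 1 ≤ t < m, ρ ≥ 1, n ≥ ρ+1, and let A_x ⊆ Z_m^n be as in the model construction. Among the (ρ+1)-th coordinates of elements of A_x, the value x_{ρ+1} appears exactly m^ρ − 1 times while each value x_{ρ+1}+j for 1 ≤ j ≤ t−1 appears exactly m^ρ times; in particular x_{ρ+1} is the unique minimally-occurring value, determining the (ρ+1)-th coordinate of x from A_x. -/
import Mathlib


/-- The model construction in `(ℤ/m)^n`: first `ρ` coordinates free, coordinate `ρ+1`
(0-indexed: `ρ`) shifted by `0, ..., t-1`, remaining coordinates fixed, and `x` removed. -/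
def modelA (m n ρ t : ℕ) [NeZero m] (hρ : ρ < n) (x : Fin n → ZMod m) :
    Finset (Fin n → ZMod m) :=
  ((Finset.univ : Finset (Fin n → ZMod m)).filter fun z =>
    (∀ j : Fin n, ρ < (j : ℕ) → z j = x j) ∧
    ∃ i : Fin t, z ⟨ρ, hρ⟩ = x ⟨ρ, hρ⟩ + ((i : ℕ) : ZMod m)).erase x

lemma countS (m n ρ t : ℕ) [NeZero m] (hρ : ρ < n) (x : Fin n → ZMod m)
    (v : ZMod m) (hv : ∃ i : Fin t, v = x ⟨ρ, hρ⟩ + ((i : ℕ) : ZMod m)) :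
    (((Finset.univ : Finset (Fin n → ZMod m)).filter fun z =>
      (∀ j : Fin n, ρ < (j : ℕ) → z j = x j) ∧
      ∃ i : Fin t, z ⟨ρ, hρ⟩ = x ⟨ρ, hρ⟩ + ((i : ℕ) : ZMod m)).filter
        fun z => z ⟨ρ, hρ⟩ = v).card = m ^ ρ := by
  have : (((Finset.univ : Finset (Fin n → ZMod m)).filter fun z =>
      (∀ j : Fin n, ρ < (j : ℕ) → z j = x j) ∧
      ∃ i : Fin t, z ⟨ρ, hρ⟩ = x ⟨ρ, hρ⟩ + ((i : ℕ) : ZMod m)).filter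
        fun z => z ⟨ρ, hρ⟩ = v).card
      = ((Finset.univ : Finset (Fin ρ → ZMod m))).card := by
    apply Finset.card_bij' (fun z _ => fun i : Fin ρ => z ⟨i, lt_trans i.2 hρ⟩)
      (fun w _ => fun j : Fin n =>
        if h : (j : ℕ) < ρ then w ⟨j, h⟩ else if (j : ℕ) = ρ then v else x j)
    · intro z _; exact Finset.mem_univ _
    · intro w _
      simp only [Finset.mem_filter, Finset.mem_univ, true_and]
      refine ⟨⟨fun j hj => ?_, ?_⟩, ?_⟩
      · simp only [dif_neg (by omega : ¬ (j : ℕ) < ρ), if_neg (by omega : ¬ (j : ℕ) = ρ)]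
      · obtain ⟨i, hi⟩ := hv
        exact ⟨i, by simp [hi]⟩
      · simp
    · intro z hz
      funext j
      simp only [Finset.mem_filter, Finset.mem_univ, true_and] at hz
      by_cases h : (j : ℕ) < ρ
      · simp [h]
      · by_cases h2 : (j : ℕ) = ρ
        · simp only [dif_neg h, if_pos h2]
          have : j = ⟨ρ, hρ⟩ := Fin.ext h2
          rw [this]; exact hz.2.symm
        · simp only [dif_neg h, if_neg h2]
          exact (hz.1.1 j (by omega)).symm
    · intro w _
      funext i
      simp [i.2]
  rw [this]
  simp [Finset.card_univ]

theorem stmt_19 (m n ρ t : ℕ) [NeZero m] (hm : 2 ≤ m) (ht : 1 ≤ t) (htm : t < m)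
    (hρ1 : 1 ≤ ρ) (hρ : ρ < n) (x : Fin n → ZMod m) :
    (((modelA m n ρ t hρ x).filter fun z => z ⟨ρ, hρ⟩ = x ⟨ρ, hρ⟩).card = m ^ ρ - 1) ∧
    (∀ j : ℕ, 1 ≤ j → j < t →
      ((modelA m n ρ t hρ x).filter fun z =>
        z ⟨ρ, hρ⟩ = x ⟨ρ, hρ⟩ + (j : ZMod m)).card = m ^ ρ) ∧
    (∀ v : ZMod m, (∃ z ∈ modelA m n ρ t hρ x, z ⟨ρ, hρ⟩ = v) → v ≠ x ⟨ρ, hρ⟩ →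
      ((modelA m n ρ t hρ x).filter fun z => z ⟨ρ, hρ⟩ = v).card = m ^ ρ) := by
  set B := ((Finset.univ : Finset (Fin n → ZMod m)).filter fun z =>
    (∀ j : Fin n, ρ < (j : ℕ) → z j = x j) ∧
    ∃ i : Fin t, z ⟨ρ, hρ⟩ = x ⟨ρ, hρ⟩ + ((i : ℕ) : ZMod m)) with hB
  have hA : modelA m n ρ t hρ x = B.erase x := rfl
  have key : ∀ v : ZMod m, (∃ i : Fin t, v = x ⟨ρ, hρ⟩ + ((i : ℕ) : ZMod m)) →
      (B.filter fun z => z ⟨ρ, hρ⟩ = v).card = m ^ ρ := fun v hv =>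
    countS m n ρ t hρ x v hv
  refine ⟨?_, ?_, ?_⟩
  · rw [hA, Finset.filter_erase]
    have hx : x ∈ B.filter fun z => z ⟨ρ, hρ⟩ = x ⟨ρ, hρ⟩ := by
      rw [Finset.mem_filter, hB, Finset.mem_filter]
      exact ⟨⟨Finset.mem_univ _, fun j _ => rfl, ⟨⟨0, ht⟩, by simp⟩⟩, rfl⟩
    rw [Finset.card_erase_of_mem hx, key (x ⟨ρ, hρ⟩) ⟨⟨0, ht⟩, by simp⟩]
  · intro j hj hjt
    rw [hA, Finset.filter_erase]
    have hx : x ∉ B.filter fun z => z ⟨ρ, hρ⟩ = x ⟨ρ, hρ⟩ + (j : ZMod m) := by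
      simp only [Finset.mem_filter, not_and]
      intro _
      intro h
      have : (j : ZMod m) = 0 := by
        have := h.symm
        rwa [left_eq_add] at h
      have hd := (ZMod.natCast_eq_zero_iff j m).mp this
      have := Nat.le_of_dvd (by omega) hd
      omega
    rw [Finset.erase_eq_of_notMem hx]
    exact key _ ⟨⟨j, hjt⟩, rfl⟩
  · intro v ⟨z, hz, hzv⟩ hvx
    have hzB : z ∈ B := Finset.mem_of_mem_erase (hA ▸ hz)
    simp only [hB, Finset.mem_filter, Finset.mem_univ, true_and] at hzB
    obtain ⟨_, i, hi⟩ := hzB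
    rw [hA, Finset.filter_erase]
    have hx : x ∉ B.filter fun z => z ⟨ρ, hρ⟩ = v := by
      simp only [Finset.mem_filter, not_and]
      intro _ h
      exact hvx h.symm
    rw [Finset.erase_eq_of_notMem hx]
    exact key v ⟨i, by rw [← hzv, hi]⟩
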